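/- Let z₁, z₂, ζ_α, ζ_β ∈ ℂ be pairwise distinct, L₀ an invertible n×n complex matrix, a₁, a₂, c_β ∈ ℂⁿ and b₁†, b₂†, d_α† row vectors with d_α†a₁ ≠ 0 and b₂†c_β ≠ 0. Define B₁(z) = I + ((z₁ − ζ_α)/(z − z₁))·(L₀⁻¹a₁)(d_α†L₀)/(d_α†a₁) and B₂(z) = I + ((z₂ − ζ_β)/(z − z₂))·(c_β b₂†)/(b₂†c_β), and assume L₀ + a₁b₁†/(z − z₁) + a₂b₂†/(z − z₂) = L₀·B₁(z)·B₂(z) for all z ∉ {z₁, z₂}. If a₁ ≠ 0, then b₁† = ((z₁ − ζ_α)/(d_α†a₁))·d_α†·L₀·B₂(z₁); in particular the row vector d_α†·L₀·B₂(z₁) is proportional to b₁†. -/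

import Mathlib

open Matrix

lemma mul_vmv {n : ℕ} (M : Matrix (Fin n) (Fin n) ℂ) (u w : Fin n → ℂ) :
    M * vecMulVec u w = vecMulVec (M *ᵥ u) w := by
  ext i j
  simp [mul_apply, vecMulVec_apply, mulVec, dotProduct, Finset.sum_mul, mul_assoc]

lemma vmv_mul_vmv {n : ℕ} (a v c b : Fin n → ℂ) :
    vecMulVec a v * vecMulVec c b = (v ⬝ᵥ c) • vecMulVec a b := by
  ext i j
  simp [mul_apply, vecMulVec_apply, dotProduct, Finset.sum_mul, Finset.mul_sum]
  ring_nf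
  exact Finset.sum_congr rfl fun k _ => by ring

lemma vm_vmv {n : ℕ} (v u w : Fin n → ℂ) :
    v ᵥ* vecMulVec u w = (v ⬝ᵥ u) • w := by
  ext j
  simp [vecMul, vecMulVec_apply, dotProduct, Finset.sum_mul]
  exact Finset.sum_congr rfl fun k _ => by ring

lemma vm_smul {n : ℕ} (c : ℂ) (v : Fin n → ℂ) (M : Matrix (Fin n) (Fin n) ℂ) :
    v ᵥ* (c • M) = c • (v ᵥ* M) := by
  ext j
  simp [vecMul, dotProduct, Finset.mul_sum]
  exact Finset.sum_congr rfl fun k _ => by ring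

set_option maxHeartbeats 1000000 in
/-- From the factorization `L(z) = L₀·B₁(z)·B₂(z)` of a quadratic Lax matrix,
the residue at `z₁` gives `b₁† = ((z₁ − ζ_α)/(d_α†a₁))·d_α†L₀B₂(z₁)`; in
particular `d_α†·L₀·B₂(z₁)` is proportional to `b₁†`. -/
theorem quadratic_lax_b₁_relation (n : ℕ) (z₁ z₂ ζα ζβ : ℂ)
    (hdist : ([z₁, z₂, ζα, ζβ] : List ℂ).Pairwise (· ≠ ·))
    (L₀ : Matrix (Fin n) (Fin n) ℂ) (hL₀ : IsUnit L₀)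
    (a₁ a₂ cβ b₁ b₂ dα : Fin n → ℂ)
    (hda : dα ⬝ᵥ a₁ ≠ 0) (hbc : b₂ ⬝ᵥ cβ ≠ 0)
    (B₁ B₂ : ℂ → Matrix (Fin n) (Fin n) ℂ)
    (hB₁ : ∀ z, B₁ z = 1 + (((z₁ - ζα) / (z - z₁)) / (dα ⬝ᵥ a₁)) •
        vecMulVec (L₀⁻¹.mulVec a₁) (Matrix.vecMul dα L₀))
    (hB₂ : ∀ z, B₂ z = 1 + (((z₂ - ζβ) / (z - z₂)) / (b₂ ⬝ᵥ cβ)) •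
        vecMulVec cβ b₂)
    (hfact : ∀ z, z ≠ z₁ → z ≠ z₂ →
      L₀ + (z - z₁)⁻¹ • vecMulVec a₁ b₁ + (z - z₂)⁻¹ • vecMulVec a₂ b₂ =
        L₀ * B₁ z * B₂ z)
    (ha₁ : a₁ ≠ 0) :
    b₁ = ((z₁ - ζα) / (dα ⬝ᵥ a₁)) •
        Matrix.vecMul (Matrix.vecMul dα L₀) (B₂ z₁) ∧
    ∃ t : ℂ, Matrix.vecMul (Matrix.vecMul dα L₀) (B₂ z₁) = t • b₁ := by
  simp only [List.pairwise_cons, List.mem_cons, List.mem_singleton,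
    List.not_mem_nil, forall_eq_or_imp, forall_eq] at hdist
  obtain ⟨⟨h12, h1α, -⟩, -⟩ := hdist
  obtain ⟨i, hi⟩ : ∃ i, a₁ i ≠ 0 := Function.ne_iff.mp ha₁
  set e := dα ⬝ᵥ a₁ with he
  set f := b₂ ⬝ᵥ cβ with hf
  set v := dα ᵥ* L₀ with hv
  set u := L₀ *ᵥ cβ with hu
  set s := v ⬝ᵥ cβ with hs
  have hLL : L₀ * L₀⁻¹ = 1 := mul_nonsing_inv _ ((isUnit_iff_isUnit_det _).mp hL₀)
  have hLB₁ : ∀ z, L₀ * B₁ z = L₀ + ((z₁ - ζα) / (z - z₁) / e) • vecMulVec a₁ v := by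
    intro z
    rw [hB₁, mul_add, mul_one, Matrix.mul_smul, mul_vmv, mulVec_mulVec, hLL, one_mulVec]
  have hRHS : ∀ z, L₀ * B₁ z * B₂ z =
      L₀ + ((z₂ - ζβ) / (z - z₂) / f) • vecMulVec u b₂
        + ((z₁ - ζα) / (z - z₁) / e) • vecMulVec a₁ v
        + (((z₁ - ζα) / (z - z₁) / e) * ((z₂ - ζβ) / (z - z₂) / f) * s) •
            vecMulVec a₁ b₂ := by
    intro z
    rw [hLB₁, hB₂, add_mul, mul_add, mul_one, Matrix.mul_smul, mul_vmv,
      Matrix.smul_mul, mul_add, mul_one, Matrix.mul_smul, vmv_mul_vmv, ← hu]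
    simp only [smul_add, smul_smul]
    module
  have key : ∀ z, z ≠ z₁ → z ≠ z₂ → ∀ j,
      (z - z₂) * f * e * (a₁ i * b₁ j) + (z - z₁) * f * e * (a₂ i * b₂ j) =
        (z₂ - ζβ) * e * (z - z₁) * (u i * b₂ j)
        + (z₁ - ζα) * f * (z - z₂) * (a₁ i * v j)
        + (z₁ - ζα) * (z₂ - ζβ) * s * (a₁ i * b₂ j) := by
    intro z hz1 hz2 j
    have hz1' : z - z₁ ≠ 0 := sub_ne_zero.mpr hz1
    have hz2' : z - z₂ ≠ 0 := sub_ne_zero.mpr hz2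
    have H := hfact z hz1 hz2
    rw [hRHS] at H
    have H2 := congrFun (congrFun H i) j
    simp only [Matrix.add_apply, Matrix.smul_apply, vecMulVec_apply,
      smul_eq_mul] at H2
    field_simp at H2
    refine mul_left_cancel₀ (mul_ne_zero (mul_ne_zero (mul_ne_zero (mul_ne_zero
      (mul_ne_zero hz1' hz2') hz1') hz2') hda) hbc :
      (z - z₁) * (z - z₂) * (z - z₁) * (z - z₂) * e * f ≠ 0) ?_
    linear_combination (z - z₁) * (z - z₂) * (z - z₁) * (z - z₂) * e * f * H2
  set x : ℂ := if z₁ + 1 = z₂ then z₁ + 2 else z₁ + 1 with hx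
  set y : ℂ := if z₁ + 3 = z₂ then z₁ + 4 else z₁ + 3 with hy
  have hx1 : x ≠ z₁ := by
    rw [hx]; split_ifs <;> intro h <;>
      first
      | exact absurd (by linear_combination h) (by norm_num : ((2:ℂ) ≠ 0))
      | exact absurd (by linear_combination h) (by norm_num : ((1:ℂ) ≠ 0))
  have hx2 : x ≠ z₂ := by
    rw [hx]; split_ifs with hc <;> intro h
    · exact absurd (by linear_combination h - hc) (by norm_num : ((1:ℂ) ≠ 0))
    · exact hc h
  have hy1 : y ≠ z₁ := by
    rw [hy]; split_ifs <;> intro h <;>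
      first
      | exact absurd (by linear_combination h) (by norm_num : ((4:ℂ) ≠ 0))
      | exact absurd (by linear_combination h) (by norm_num : ((3:ℂ) ≠ 0))
  have hy2 : y ≠ z₂ := by
    rw [hy]; split_ifs with hc <;> intro h
    · exact absurd (by linear_combination h - hc) (by norm_num : ((1:ℂ) ≠ 0))
    · exact hc h
  have hxy : y - x ≠ 0 := by
    rw [hx, hy]; split_ifs <;> intro h <;>
      first
      | exact absurd (by linear_combination h) (by norm_num : ((2:ℂ) ≠ 0))
      | exact absurd (by linear_combination h) (by norm_num : ((1:ℂ) ≠ 0))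
      | exact absurd (by linear_combination h) (by norm_num : ((3:ℂ) ≠ 0))
  have hx1' : x - z₁ ≠ 0 := sub_ne_zero.mpr hx1
  have hx2' : x - z₂ ≠ 0 := sub_ne_zero.mpr hx2
  have hy1' : y - z₁ ≠ 0 := sub_ne_zero.mpr hy1
  have hy2' : y - z₂ ≠ 0 := sub_ne_zero.mpr hy2
  have h12' : z₁ - z₂ ≠ 0 := sub_ne_zero.mpr h12
  have h1α' : z₁ - ζα ≠ 0 := sub_ne_zero.mpr h1α
  have hw : (v ᵥ* B₂ z₁) = v + ((z₂ - ζβ) / (z₁ - z₂) / f * s) • b₂ := by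
    rw [hB₂, vecMul_add, vecMul_one, vm_smul, vm_vmv, smul_smul]
  have main : ∀ j, b₁ j =
      (z₁ - ζα) / e * (v j + (z₂ - ζβ) / (z₁ - z₂) / f * s * b₂ j) := by
    intro j
    have Ex := key x hx1 hx2 j
    have Ey := key y hy1 hy2 j
    have T : (y - x) * ((z₁ - z₂) * f * e * (a₁ i * b₁ j)) =
        (y - x) * ((z₁ - ζα) * f * (z₁ - z₂) * (a₁ i * v j)
          + (z₁ - ζα) * (z₂ - ζβ) * s * (a₁ i * b₂ j)) := by
      linear_combination (y - z₁) * Ex + (z₁ - x) * Ey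
    have T2 := mul_left_cancel₀ hxy T
    refine mul_left_cancel₀ hi ?_
    field_simp
    refine mul_left_cancel₀ hi ?_
    linear_combination T2
  have part1 : b₁ = ((z₁ - ζα) / e) • (v ᵥ* B₂ z₁) := by
    funext j
    rw [hw]
    simpa using main j
  refine ⟨part1, ⟨e / (z₁ - ζα), ?_⟩⟩
  rw [part1, smul_smul, div_mul_div_comm, mul_comm e (z₁ - ζα),
    div_self (mul_ne_zero h1α' hda), one_smul]
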